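/- arXiv:2005.09847 — 6 statements merged into one kernel-verified Lean document; each statement's English description precedes it below -/
import Mathlib

section
/- Let Γₙ be the graph on {v₀,…,vₙ, w₀,…,wₙ} with edges: all pairs among the vⱼ, and wᵢ adjacent to vⱼ iff j ≠ i. Define z_r(Γₙ) as the maximum of Σ_{i=1}^r |Cᵢ| over cliques C₁,…,C_r of Γₙ with empty common intersection ∩_{i=1}^r Cᵢ = ∅. Then for 2 ≤ r ≤ n, z_r(Γₙ) = (r−1)(n+1) + r. -/
/-- The vertex set of the graph `Γₙ`: vertices `v₀, …, vₙ` (left) and `w₀, …, wₙ` (right). -/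
def GammaVert (n : ℕ) : Type := Fin (n + 1) ⊕ Fin (n + 1)

/-- The graph `Γₙ`: all pairs among the `vⱼ` are adjacent, and `wᵢ` is adjacent to `vⱼ`
iff `i ≠ j`; no two `w`'s are adjacent. -/
def Gamma (n : ℕ) : SimpleGraph (GammaVert n) :=
  SimpleGraph.fromRel fun a b =>
    match a, b with
    | Sum.inl _, Sum.inl _ => True
    | Sum.inl j, Sum.inr i => i ≠ j
    | Sum.inr i, Sum.inl j => i ≠ j
    | Sum.inr _, Sum.inr _ => False

instance (n : ℕ) : Fintype (GammaVert n) := by unfold GammaVert; infer_instance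
instance (n : ℕ) : DecidableEq (GammaVert n) := by unfold GammaVert; infer_instance

/-- The set of total sizes `∑ i, |Cᵢ|` over all `r`-tuples of cliques `C₁, …, C_r` of `Γₙ`
with empty common intersection. -/
def cliqueSums (n r : ℕ) : Set ℕ :=
  {s | ∃ C : Fin r → Finset (GammaVert n),
    (∀ i, (Gamma n).IsClique (C i : Set (GammaVert n))) ∧
    Finset.univ.inf C = ∅ ∧ s = ∑ i, (C i).card}

lemma gamma_adj_ll {n : ℕ} {j k : Fin (n+1)} (h : j ≠ k) :
    (Gamma n).Adj (Sum.inl j) (Sum.inl k) := by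
  simp only [Gamma, SimpleGraph.fromRel_adj]
  exact ⟨fun he => h (Sum.inl.inj he), Or.inl trivial⟩

lemma gamma_adj_lr {n : ℕ} {j i : Fin (n+1)} (h : i ≠ j) :
    (Gamma n).Adj (Sum.inl j) (Sum.inr i) := by
  simp only [Gamma, SimpleGraph.fromRel_adj]
  exact ⟨Sum.inl_ne_inr, Or.inl h⟩

lemma gamma_not_adj_rr {n : ℕ} {i k : Fin (n+1)} :
    ¬ (Gamma n).Adj (Sum.inr i) (Sum.inr k) := by
  intro h
  have h' := (SimpleGraph.fromRel_adj _ _ _).mp h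
  rcases h' with ⟨_, h | h⟩ <;> exact h

lemma gamma_upper (n r : ℕ) (hr : 2 ≤ r)
    (C : Fin r → Finset (GammaVert n))
    (hcl : ∀ i, (Gamma n).IsClique (C i : Set (GammaVert n)))
    (hinf : Finset.univ.inf C = ∅) :
    ∑ i, (C i).card ≤ (r - 1) * (n + 1) + r := by
  classical
  obtain ⟨r', rfl⟩ : ∃ r', r = r' + 1 := ⟨r - 1, by omega⟩
  set D : Fin (r'+1) → Finset (Fin (n+1)) :=
    fun i => Finset.univ.filter (fun j => Sum.inl j ∈ C i) with hD
  set M : Fin (r'+1) → Finset (Fin (n+1)) :=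
    fun i => Finset.univ.filter (fun j => ¬ Sum.inl j ∈ C i) with hM
  -- each clique has at most one `inr` element
  have hB : ∀ i, ((C i).filter (fun x => x.isRight)).card ≤ 1 := by
    intro i
    rw [Finset.card_le_one]
    intro a ha b hb
    simp only [Finset.mem_filter] at ha hb
    obtain ⟨a', rfl⟩ := Sum.isRight_iff.mp ha.2
    obtain ⟨b', rfl⟩ := Sum.isRight_iff.mp hb.2
    by_contra hne
    exact gamma_not_adj_rr (hcl i ha.1 hb.1 hne)
  have hA : ∀ i, ((C i).filter fun x => x.isLeft) = (D i).image Sum.inl := by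
    intro i; ext x
    cases x with
    | inl j =>
      constructor
      · intro h; exact Finset.mem_image.mpr ⟨j, by simp only [hD, Finset.mem_filter, Finset.mem_univ, true_and]; exact (Finset.mem_filter.mp h).1, rfl⟩
      · intro h
        obtain ⟨b, hb, he⟩ := Finset.mem_image.mp h
        have hbj : b = j := Sum.inl.inj he
        subst hbj
        exact Finset.mem_filter.mpr ⟨by simp only [hD, Finset.mem_filter, Finset.mem_univ, true_and] at hb; exact hb, rfl⟩
    | inr k =>
      constructor
      · intro h; exact absurd (Finset.mem_filter.mp h).2 (by simp)
      · intro h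
        obtain ⟨b, hb, he⟩ := Finset.mem_image.mp h
        exact absurd he Sum.inl_ne_inr
  have hcard : ∀ i, (C i).card ≤ (D i).card + 1 := by
    intro i
    have h1 : ((C i).filter fun x => x.isLeft).card + ((C i).filter fun x => ¬ x.isLeft).card
        = (C i).card := Finset.card_filter_add_card_filter_not _
    have h2 : ((C i).filter fun x => ¬ x.isLeft) = ((C i).filter fun x => x.isRight) := by
      apply Finset.filter_congr; intro x _; cases x <;> simp
    have h3 : ((C i).filter fun x => x.isLeft).card = (D i).card := by
      rw [hA i]; exact Finset.card_image_of_injective _ Sum.inl_injective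
    rw [h2, h3] at h1
    have := hB i
    omega
  have hDM : ∀ i, (D i).card + (M i).card = n + 1 := by
    intro i
    have := Finset.card_filter_add_card_filter_not
      (s := (Finset.univ : Finset (Fin (n+1)))) (p := fun j => Sum.inl j ∈ C i)
    simpa [hD, hM] using this
  have hsum2 : (∑ i, (D i).card) + (∑ i, (M i).card) = (r'+1) * (n+1) := by
    rw [← Finset.sum_add_distrib]
    simp [hDM, Finset.sum_const, Finset.card_univ, mul_comm]
  have hMlb : n + 1 ≤ ∑ i, (M i).card := by
    have hrw : ∀ i, (M i).card = ∑ j : Fin (n+1), if Sum.inl j ∈ C i then 0 else 1 := by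
      intro i
      rw [hM, Finset.card_filter]
      apply Finset.sum_congr rfl
      intro j _
      by_cases h : Sum.inl j ∈ C i <;> simp [h]
    calc n + 1 = ∑ _j : Fin (n+1), 1 := by simp
    _ ≤ ∑ j : Fin (n+1), ∑ i, if Sum.inl j ∈ C i then 0 else 1 := by
        apply Finset.sum_le_sum
        intro j _
        have hj : Sum.inl j ∉ Finset.univ.inf C := by rw [hinf]; exact Finset.notMem_empty _
        replace hj : ¬ ∀ i ∈ Finset.univ, Sum.inl j ∈ C i := fun h => hj (Finset.mem_inf.mpr h)
        push_neg at hj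
        obtain ⟨i, _, hi⟩ := hj
        have := Finset.single_le_sum (f := fun i => if Sum.inl j ∈ C i then 0 else 1)
          (fun _ _ => Nat.zero_le _) (Finset.mem_univ i)
        simpa [hi] using this
    _ = ∑ i, ∑ j : Fin (n+1), if Sum.inl j ∈ C i then 0 else 1 := Finset.sum_comm
    _ = ∑ i, (M i).card := by simp [hrw]
  have hsum1 : ∑ i, (C i).card ≤ (∑ i, (D i).card) + (r' + 1) := by
    calc ∑ i, (C i).card ≤ ∑ i, ((D i).card + 1) := Finset.sum_le_sum fun i _ => hcard i
    _ = (∑ i, (D i).card) + (r' + 1) := by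
        rw [Finset.sum_add_distrib]; simp
  have hx : (r' + 1) * (n + 1) = r' * (n + 1) + (n + 1) := by ring
  simp only [Nat.add_sub_cancel]
  linarith

lemma clique_insert_inr {n : ℕ} (w : Fin (n+1)) (S : Finset (Fin (n+1))) (hw : w ∉ S) :
    (Gamma n).IsClique ((insert (Sum.inr w) (S.image Sum.inl) : Finset (GammaVert n)) : Set (GammaVert n)) := by
  intro x hx y hy hxy
  replace hx := (Finset.mem_insert.mp (Finset.mem_coe.mp hx)).imp id Finset.mem_image.mp
  replace hy := (Finset.mem_insert.mp (Finset.mem_coe.mp hy)).imp id Finset.mem_image.mp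
  rcases hx with rfl | ⟨a, ha, rfl⟩ <;> rcases hy with rfl | ⟨b, hb, rfl⟩
  · exact absurd rfl hxy
  · exact (gamma_adj_lr (fun h => hw (by rw [h]; exact hb))).symm
  · exact gamma_adj_lr (fun h => hw (h ▸ ha))
  · exact gamma_adj_ll (fun h => hxy (by rw [h]))

lemma gamma_exists (n r : ℕ) (hn : 2 ≤ n) (hr : 2 ≤ r) (hrn : r ≤ n) :
    ∃ C : Fin r → Finset (GammaVert n),
      (∀ i, (Gamma n).IsClique (C i : Set (GammaVert n))) ∧
      Finset.univ.inf C = ∅ ∧ (r - 1) * (n + 1) + r = ∑ i, (C i).card := by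
  classical
  obtain ⟨r', rfl⟩ : ∃ r', r = r' + 1 := ⟨r - 1, by omega⟩
  have hr1 : 1 ≤ r' := by omega
  set lastr : Fin (r'+1) := ⟨r', by omega⟩ with hlastr
  set S0 : Finset (Fin (n+1)) :=
    (Finset.univ.erase lastr).image (fun k => ⟨k.val + 1, by have := k.isLt; omega⟩) with hS0
  set C : Fin (r'+1) → Finset (GammaVert n) := fun i =>
    if i.val = r' then insert (Sum.inr 0) (S0.image Sum.inl)
    else insert (Sum.inr ⟨i.val + 1, by have := i.isLt; omega⟩)
      ((Finset.univ.erase (⟨i.val + 1, by have := i.isLt; omega⟩ : Fin (n+1))).image Sum.inl)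
    with hC
  have hmemS0 : ∀ j : Fin (n+1), j ∈ S0 ↔ (1 ≤ j.val ∧ j.val ≤ r') := by
    intro j
    simp only [hS0, Finset.mem_image, Finset.mem_erase, Finset.mem_univ, and_true]
    constructor
    · rintro ⟨k, hk, rfl⟩
      have hk' : k.val ≠ r' := by simpa [Fin.ext_iff, hlastr] using hk
      have := k.isLt
      simp only [Fin.val_mk]
      omega
    · rintro ⟨h1, h2⟩
      refine ⟨⟨j.val - 1, by omega⟩, ?_, ?_⟩
      · intro h
        have := congrArg Fin.val h
        simp only [hlastr] at this
        omega
      · apply Fin.ext; simp; omega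
  have hClast : C lastr = insert (Sum.inr 0) (S0.image Sum.inl) := by
    simp only [hC]
    split_ifs with h
    · rfl
    · simp [hlastr] at h
  refine ⟨C, ?_, ?_, ?_⟩
  · -- cliques
    intro i
    by_cases hi : i.val = r'
    · have : i = lastr := Fin.ext (by simpa [hlastr] using hi)
      rw [this, hClast]
      apply clique_insert_inr
      intro h0
      rw [hmemS0] at h0
      simp at h0
    · rw [hC]; simp only [hi, if_neg hi]
      exact clique_insert_inr _ _ (Finset.notMem_erase _ _)
  · -- empty intersection
    rw [Finset.eq_empty_iff_forall_notMem]
    intro x hx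
    rw [Finset.mem_inf] at hx
    cases x with
    | inl j =>
      by_cases hj : 1 ≤ j.val ∧ j.val ≤ r'
      · have hi : (⟨j.val - 1, by omega⟩ : Fin (r'+1)).val ≠ r' := by simp; omega
        have := hx ⟨j.val - 1, by omega⟩ (Finset.mem_univ _)
        rw [hC] at this
        simp only [if_neg hi] at this
        replace this := (Finset.mem_insert.mp this).imp id Finset.mem_image.mp
        rcases this with h | ⟨b, hb, he⟩
        · exact absurd h (by simp)
        · have hbj : b = j := Sum.inl.inj he
          simp only [Finset.mem_erase, Finset.mem_univ, and_true] at hb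
          apply hb
          rw [hbj]
          apply Fin.ext; simp; omega
      · have := hx lastr (Finset.mem_univ _)
        rw [hClast] at this
        replace this := (Finset.mem_insert.mp this).imp id Finset.mem_image.mp
        rcases this with h | ⟨b, hb, he⟩
        · exact absurd h (by simp)
        · rw [hmemS0] at hb
          have hbj : b = j := Sum.inl.inj he
          rw [hbj] at hb
          omega
    | inr k =>
      by_cases hk : k.val = 0
      · have hi : ((⟨0, by omega⟩ : Fin (r'+1))).val ≠ r' := by simp; omega
        have := hx ⟨0, by omega⟩ (Finset.mem_univ _)
        rw [hC] at this
        simp only [if_neg hi] at this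
        replace this := (Finset.mem_insert.mp this).imp id Finset.mem_image.mp
        rcases this with h | ⟨b, hb, he⟩
        · have h2 : k.val = 0 + 1 := congrArg Fin.val (Sum.inr.inj h)
          omega
        · exact absurd he (by simp)
      · have := hx lastr (Finset.mem_univ _)
        rw [hClast] at this
        replace this := (Finset.mem_insert.mp this).imp id Finset.mem_image.mp
        rcases this with h | ⟨b, hb, he⟩
        · have h2 : k.val = (0 : Fin (n+1)).val := congrArg Fin.val (Sum.inr.inj h)
          simp only [Fin.val_zero] at h2
          omega
        · exact absurd he (by simp)
  · -- sum
    have hcardS0 : S0.card = r' := by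
      rw [hS0, Finset.card_image_of_injective, Finset.card_erase_of_mem (Finset.mem_univ _),
        Finset.card_univ]
      · simp
      · intro a b hab
        have := congrArg Fin.val hab
        simp at this
        exact Fin.ext this
    have hclast : (C lastr).card = r' + 1 := by
      rw [hClast]
      change Finset.card (insert _ (_ : Finset (Fin (n+1) ⊕ Fin (n+1)))) = _
      rw [Finset.card_insert_of_notMem (by simp),
        Finset.card_image_of_injective _ Sum.inl_injective, hcardS0]
    have hcother : ∀ i, i.val ≠ r' → (C i).card = n + 1 := by
      intro i hi
      rw [hC]
      simp only [if_neg hi]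
      change Finset.card (insert _ (Finset.image (Sum.inl : Fin (n+1) → Fin (n+1) ⊕ Fin (n+1)) _)) = _
      rw [Finset.card_insert_of_notMem (by simp),
        Finset.card_image_of_injective _ Sum.inl_injective,
        Finset.card_erase_of_mem (Finset.mem_univ _), Finset.card_univ]
      simp
    rw [← Finset.sum_erase_add _ _ (Finset.mem_univ lastr)]
    have hsum : ∑ i ∈ Finset.univ.erase lastr, (C i).card = r' * (n + 1) := by
      rw [Finset.sum_congr rfl (fun i hi => hcother i (by
        rw [Finset.mem_erase] at hi
        exact fun h => hi.1 (Fin.ext (by simp [hlastr, h]))))]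
      rw [Finset.sum_const, Finset.card_erase_of_mem (Finset.mem_univ _), Finset.card_univ]
      simp [mul_comm]
    rw [hsum, hclast]
    simp only [Nat.add_sub_cancel]
    try ring
    try omega

/-- For `2 ≤ r ≤ n`, the maximum `z_r(Γₙ)` of total sizes of `r` cliques with empty
common intersection equals `(r-1)(n+1) + r`. -/
theorem stmt_3 (n r : ℕ) (hn : 2 ≤ n) (hr : 2 ≤ r) (hrn : r ≤ n) :
    IsGreatest (cliqueSums n r) ((r - 1) * (n + 1) + r) := by
  constructor
  · obtain ⟨C, h1, h2, h3⟩ := gamma_exists n r hn hr hrn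
    exact ⟨C, h1, h2, h3⟩
  · rintro s ⟨C, h1, h2, rfl⟩
    exact gamma_upper n r hr C h1 h2
end

section
/- Let Γₙ be the graph on {v₀,…,vₙ, w₀,…,wₙ} with edges: all pairs among the vⱼ, and wᵢ adjacent to vⱼ iff j ≠ i. Define z_r(Γₙ) as the maximum of Σ_{i=1}^r |Cᵢ| over cliques C₁,…,C_r of Γₙ with ∩_{i=1}^r Cᵢ = ∅. Then for all r > n, z_r(Γₙ) = r(n+1). -/
lemma gv_inl_inj (n : ℕ) (j j' : Fin (n+1)) :
    (Sum.inl j : GammaVert n) = Sum.inl j' ↔ j = j' := by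
  constructor
  · intro h; injection h
  · intro h; rw [h]

lemma gv_inl_ne_inr (n : ℕ) (j i : Fin (n+1)) :
    (Sum.inl j : GammaVert n) ≠ Sum.inr i := by
  intro h; injection h

lemma gv_inr_inj (n : ℕ) (i i' : Fin (n+1)) :
    (Sum.inr i : GammaVert n) = Sum.inr i' ↔ i = i' := by
  constructor
  · intro h; injection h
  · intro h; rw [h]

lemma adj_ll (n : ℕ) (j j' : Fin (n+1)) :
    (Gamma n).Adj (Sum.inl j) (Sum.inl j') ↔ j ≠ j' := by
  simp only [Gamma]
  erw [SimpleGraph.fromRel_adj]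
  simp only [and_true, or_self]
  exact not_congr (gv_inl_inj n j j')

lemma adj_lr (n : ℕ) (j i : Fin (n+1)) :
    (Gamma n).Adj (Sum.inl j) (Sum.inr i) ↔ i ≠ j := by
  simp only [Gamma]
  erw [SimpleGraph.fromRel_adj]
  simp [gv_inl_ne_inr]
  exact fun _ => gv_inl_ne_inr n j i

lemma adj_rr (n : ℕ) (i i' : Fin (n+1)) :
    ¬ (Gamma n).Adj (Sum.inr i) (Sum.inr i') := by
  simp only [Gamma]
  erw [SimpleGraph.fromRel_adj]
  simp

/-- Any clique of `Γₙ` has at most `n+1` vertices. -/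
lemma clique_card_le (n : ℕ) (K : Finset (GammaVert n))
    (hK : (Gamma n).IsClique (K : Set (GammaVert n))) : K.card ≤ n + 1 := by
  classical
  set A := K.filter (fun x => x.isLeft) with hA
  set B := K.filter (fun x => ¬ x.isLeft) with hB
  have hcard : K.card ≤ A.card + B.card := by
    refine le_trans (Finset.card_le_card ?_) (Finset.card_union_le A B)
    intro x hx
    rw [Finset.mem_union, hA, hB]
    by_cases h : x.isLeft
    · exact Or.inl (Finset.mem_filter.mpr ⟨hx, h⟩)
    · exact Or.inr (Finset.mem_filter.mpr ⟨hx, h⟩)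
  have hBle : B.card ≤ 1 := by
    rw [Finset.card_le_one]
    intro a ha b hb
    obtain ⟨haK, haL⟩ := Finset.mem_filter.mp ha
    obtain ⟨hbK, hbL⟩ := Finset.mem_filter.mp hb
    by_contra hne
    have hadj := hK haK hbK hne
    match a, b with
    | Sum.inl _, _ => simp at haL
    | Sum.inr _, Sum.inl _ => simp at hbL
    | Sum.inr i, Sum.inr i' => exact adj_rr n i i' hadj
  rcases Finset.eq_empty_or_nonempty B with hBe | ⟨b, hb⟩
  · have hB0 : B.card = 0 := by rw [hBe]; rfl
    have : A.card ≤ (Finset.univ.image (Sum.inl : Fin (n+1) → GammaVert n)).card := by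
      apply Finset.card_le_card
      intro x hx
      obtain ⟨hxK, hxL⟩ := Finset.mem_filter.mp hx
      match x with
      | Sum.inl j => exact Finset.mem_image.mpr ⟨j, Finset.mem_univ j, rfl⟩
      | Sum.inr _ => simp at hxL
    have himg : (Finset.univ.image (Sum.inl : Fin (n+1) → GammaVert n)).card = n + 1 := by
      rw [Finset.card_image_of_injective _ (fun a b h => (gv_inl_inj n a b).mp h)]
      simp
    omega
  · obtain ⟨hbK, hbL⟩ := Finset.mem_filter.mp hb
    match b with
    | Sum.inl _ => simp at hbL
    | Sum.inr i =>
      have hAle : A.card ≤ ((Finset.univ.erase i).image (Sum.inl : Fin (n+1) → GammaVert n)).card := by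
        apply Finset.card_le_card
        intro x hx
        obtain ⟨hxK, hxL⟩ := Finset.mem_filter.mp hx
        match x with
        | Sum.inl j =>
          have hne : (Sum.inl j : GammaVert n) ≠ Sum.inr i := gv_inl_ne_inr n j i
          have hadj := hK hxK hbK hne
          have hij : i ≠ j := (adj_lr n j i).mp hadj
          exact Finset.mem_image.mpr ⟨j, Finset.mem_erase.mpr ⟨fun h => hij h.symm, Finset.mem_univ j⟩, rfl⟩
        | Sum.inr _ => simp at hxL
      have himg : ((Finset.univ.erase i).image (Sum.inl : Fin (n+1) → GammaVert n)).card = n := by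
        rw [Finset.card_image_of_injective _ (fun a b h => (gv_inl_inj n a b).mp h)]
        rw [Finset.card_erase_of_mem (Finset.mem_univ i)]
        simp
      omega


/-- For `r > n`, the maximum `z_r(Γₙ)` of total sizes of `r` cliques with empty
common intersection equals `r(n+1)`. -/
theorem stmt_4 (n r : ℕ) (hn : 2 ≤ n) (hr : n < r) :
    IsGreatest (cliqueSums n r) (r * (n + 1)) := by
  classical
  constructor
  · -- membership
    set f : Fin r → Fin (n + 1) := fun i => ⟨i.val % (n + 1), Nat.mod_lt _ (Nat.succ_pos n)⟩ with hf
    set C : Fin r → Finset (GammaVert n) :=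
      fun i => insert (Sum.inr (f i)) ((Finset.univ.erase (f i)).image Sum.inl) with hC
    have hmem : ∀ i x, x ∈ C i ↔ x = Sum.inr (f i) ∨ ∃ j, j ≠ f i ∧ x = Sum.inl j := by
      intro i x
      simp only [hC]
      erw [Finset.mem_insert, Finset.mem_image]
      simp only [Finset.mem_erase, Finset.mem_univ,
        and_true]
      constructor
      · rintro (h | ⟨j, hj, rfl⟩)
        · exact Or.inl h
        · exact Or.inr ⟨j, hj, rfl⟩
      · rintro (h | ⟨j, hj, rfl⟩)
        · exact Or.inl h
        · exact Or.inr ⟨j, hj, rfl⟩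
    refine ⟨C, ?_, ?_, ?_⟩
    · intro i a ha b hb hab
      rw [Finset.mem_coe, hmem] at ha hb
      rcases ha with rfl | ⟨ja, hja, rfl⟩ <;> rcases hb with rfl | ⟨jb, hjb, rfl⟩
      · exact absurd rfl hab
      · exact ((Gamma n).adj_symm ((adj_lr n jb (f i)).mpr (fun h => hjb h.symm)))
      · exact (adj_lr n ja (f i)).mpr (fun h => hja h.symm)
      · refine (adj_ll n ja jb).mpr (fun h => hab ?_)
        rw [h]
    · -- empty intersection
      rw [Finset.eq_empty_iff_forall_notMem]
      intro x hx
      have hall : ∀ i, x ∈ C i := fun i =>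
        (Finset.le_iff_subset.mp (Finset.inf_le (Finset.mem_univ i))) hx
      match x with
      | Sum.inl j =>
        have hj : (j.val : ℕ) < r := lt_of_lt_of_le j.isLt (by omega)
        have h := (hmem ⟨j.val, hj⟩ (Sum.inl j)).mp (hall ⟨j.val, hj⟩)
        have hfj : f ⟨j.val, hj⟩ = j := by
          simp only [hf]
          exact Fin.ext (Nat.mod_eq_of_lt j.isLt)
        rcases h with h | ⟨j', hj', h⟩
        · exact gv_inl_ne_inr n j _ h
        · erw [gv_inl_inj] at h
          rw [← h, hfj] at hj'
          exact hj' rfl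
      | Sum.inr i =>
        -- find an index whose f-value differs from i
        have hlt : (i.val + 1) % (n + 1) < r := lt_of_lt_of_le (Nat.mod_lt _ (Nat.succ_pos n)) (by omega)
        set k : Fin r := ⟨(i.val + 1) % (n + 1), hlt⟩ with hk
        have hfk : (f k).val = (i.val + 1) % (n + 1) := by
          simp only [hf, hk]
          exact Nat.mod_eq_of_lt (Nat.mod_lt _ (Nat.succ_pos n))
        have hne : f k ≠ i := by
          intro h
          have : (i.val + 1) % (n + 1) = i.val := by rw [← hfk, h]
          rcases Nat.lt_or_ge (i.val + 1) (n + 1) with hc | hc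
          · rw [Nat.mod_eq_of_lt hc] at this; omega
          · have : i.val + 1 = n + 1 := by omega
            have h0 : (i.val + 1) % (n + 1) = 0 := by rw [this]; exact Nat.mod_self _
            omega
        have h := (hmem k (Sum.inr i)).mp (hall k)
        rcases h with h | ⟨j', _, h⟩
        · erw [gv_inr_inj] at h
          exact hne h.symm
        · exact gv_inl_ne_inr n j' i h.symm
    · -- sum
      have hcard : ∀ i, (C i).card = n + 1 := by
        intro i
        rw [hC]
        erw [Finset.card_insert_of_notMem]
        · erw [Finset.card_image_of_injective _ (fun a b h => (gv_inl_inj n a b).mp h)]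
          rw [Finset.card_erase_of_mem (Finset.mem_univ _)]
          simp
        · intro h
          obtain ⟨j, _, hj⟩ := Finset.mem_image.mp h
          exact gv_inl_ne_inr n j (f i) hj
      rw [Finset.sum_congr rfl (fun i _ => hcard i), Finset.sum_const, Finset.card_univ,
        Fintype.card_fin, smul_eq_mul]
  · -- upper bound
    rintro s ⟨C, hcl, -, rfl⟩
    calc ∑ i, (C i).card ≤ ∑ _i : Fin r, (n + 1) :=
          Finset.sum_le_sum (fun i _ => clique_card_le n (C i) (hcl i))
    _ = r * (n + 1) := by
        rw [Finset.sum_const, Finset.card_univ, Fintype.card_fin, smul_eq_mul]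
end

section
/- For the graph Γₙ above and the sequence a_r = z_r(Γₙ), one has a_{n+1} − a_n > n+1 while a_{r+1} − a_r = n+1 for all r > n. In particular the difference sequence a_{r+1} − a_r is not constant but is eventually constant equal to the clique number n+1. -/
namespace GammaAux
open SimpleGraph Finset

variable {n : ℕ}

@[simp] lemma inl_eq_inl {i j : Fin (n+1)} :
    @Eq (GammaVert n) (Sum.inl i) (Sum.inl j) ↔ i = j :=
  ⟨fun h => Sum.inl.inj h, fun h => h ▸ rfl⟩

@[simp] lemma inr_eq_inr {i j : Fin (n+1)} :
    @Eq (GammaVert n) (Sum.inr i) (Sum.inr j) ↔ i = j :=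
  ⟨fun h => Sum.inr.inj h, fun h => h ▸ rfl⟩

@[simp] lemma inl_ne_inr {i j : Fin (n+1)} :
    @Ne (GammaVert n) (Sum.inl i) (Sum.inr j) := fun h => Sum.inl_ne_inr h

@[simp] lemma inr_ne_inl {i j : Fin (n+1)} :
    @Ne (GammaVert n) (Sum.inr i) (Sum.inl j) := fun h => Sum.inr_ne_inl h

lemma adj_ll {i j : Fin (n+1)} :
    (Gamma n).Adj (Sum.inl i) (Sum.inl j) ↔ i ≠ j := by
  exact Iff.trans (SimpleGraph.fromRel_adj ..) (by
    simp; exact ⟨fun h e => h (e ▸ rfl), fun h e => h (Sum.inl_injective e)⟩)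

lemma adj_lr {i j : Fin (n+1)} :
    (Gamma n).Adj (Sum.inl i) (Sum.inr j) ↔ j ≠ i := by
  exact Iff.trans (SimpleGraph.fromRel_adj ..) (by simp; exact fun _ => inl_ne_inr)

lemma adj_rr {i j : Fin (n+1)} :
    ¬ (Gamma n).Adj (Sum.inr i : GammaVert n) (Sum.inr j) := by
  exact fun h => by have := (SimpleGraph.fromRel_adj ..).1 h; simp at this

def V (n : ℕ) : Finset (GammaVert n) :=
  Finset.univ.image (fun i : Fin (n+1) => (Sum.inl i : GammaVert n))

def K (n : ℕ) (i : Fin (n+1)) : Finset (GammaVert n) :=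
  insert (Sum.inr i)
    ((Finset.univ.erase i).image (fun j : Fin (n+1) => (Sum.inl j : GammaVert n)))

lemma inl_injective : Function.Injective (fun i : Fin (n+1) => (Sum.inl i : GammaVert n)) :=
  fun a b h => inl_eq_inl.1 h

lemma inl_mem_V (i : Fin (n+1)) : (Sum.inl i : GammaVert n) ∈ V n := by
  exact Finset.mem_image.2 ⟨i, Finset.mem_univ _, rfl⟩

lemma wr_not_mem_V (i : Fin (n+1)) : (Sum.inr i : GammaVert n) ∉ V n := by
  exact fun h => by obtain ⟨j, -, hj⟩ := Finset.mem_image.1 h; exact Sum.inl_ne_inr hj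

lemma card_V : (V n).card = n + 1 := by
  exact (Finset.card_image_of_injective _ inl_injective).trans (by simp)

lemma inl_mem_K {i j : Fin (n+1)} : (Sum.inl i : GammaVert n) ∈ K n j ↔ i ≠ j := by
  constructor
  · intro h
    rcases Finset.mem_insert.1 h with h | h
    · exact absurd h inl_ne_inr
    · obtain ⟨k, hk, he⟩ := Finset.mem_image.1 h
      rw [← Sum.inl_injective he]; exact Finset.ne_of_mem_erase hk
  · intro h
    exact Finset.mem_insert_of_mem (Finset.mem_image.2 ⟨i, Finset.mem_erase.2 ⟨h, Finset.mem_univ _⟩, rfl⟩)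

lemma inr_mem_K {i j : Fin (n+1)} : (Sum.inr i : GammaVert n) ∈ K n j ↔ i = j := by
  constructor
  · intro h
    rcases Finset.mem_insert.1 h with h | h
    · exact Sum.inr_injective h
    · obtain ⟨k, -, he⟩ := Finset.mem_image.1 h
      exact absurd he.symm inr_ne_inl
  · rintro rfl
    exact Finset.mem_insert_self _ _

lemma card_K (i : Fin (n+1)) : (K n i).card = n + 1 := by
  exact (Finset.card_insert_of_notMem (fun h => by
    obtain ⟨k, -, hk⟩ := Finset.mem_image.1 h; exact Sum.inl_ne_inr hk)).trans
    (congrArg (· + 1) ((Finset.card_image_of_injective _ inl_injective).trans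
      (by simp [Finset.card_erase_of_mem])))

lemma isClique_V : (Gamma n).IsClique (V n : Set (GammaVert n)) := by
  intro x hx y hy hxy
  obtain ⟨i, -, rfl⟩ := Finset.mem_image.1 hx
  obtain ⟨j, -, rfl⟩ := Finset.mem_image.1 hy
  exact adj_ll.2 (fun h => hxy (by rw [h]))

lemma isClique_K (i : Fin (n+1)) : (Gamma n).IsClique (K n i : Set (GammaVert n)) := by
  intro x hx y hy hxy
  rcases Finset.mem_insert.1 hx with rfl | hx <;> rcases Finset.mem_insert.1 hy with rfl | hy
  · exact absurd rfl hxy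
  · obtain ⟨j, hj, rfl⟩ := Finset.mem_image.1 hy
    exact ((Gamma n).adj_symm (adj_lr.2 (Finset.ne_of_mem_erase hj).symm))
  · obtain ⟨j, hj, rfl⟩ := Finset.mem_image.1 hx
    exact adj_lr.2 (Finset.ne_of_mem_erase hj).symm
  · obtain ⟨j, hj, rfl⟩ := Finset.mem_image.1 hx
    obtain ⟨k, hk, rfl⟩ := Finset.mem_image.1 hy
    exact adj_ll.2 (fun h => hxy (by rw [h]))

/-- Every clique is contained in `V` or in some `K i`. -/
lemma clique_subset {C : Finset (GammaVert n)}
    (h : (Gamma n).IsClique (C : Set (GammaVert n))) :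
    C ⊆ V n ∨ ∃ i, C ⊆ K n i := by
  by_cases hw : ∃ i, (Sum.inr i : GammaVert n) ∈ C
  · obtain ⟨i, hi⟩ := hw
    right
    refine ⟨i, fun x hx => ?_⟩
    match x with
    | Sum.inl j =>
        have hji : j ≠ i := by
          rintro rfl
          exact (adj_lr.1 (h (Finset.mem_coe.2 hx) (Finset.mem_coe.2 hi) inl_ne_inr)) rfl
        exact inl_mem_K.2 hji
    | Sum.inr j =>
        have : j = i := by
          by_contra hji
          exact adj_rr (h (Finset.mem_coe.2 hx) (Finset.mem_coe.2 hi)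
            (fun he => hji (inr_eq_inr.1 he)))
        subst this
        exact inr_mem_K.2 rfl
  · left
    intro x hx
    match x with
    | Sum.inl j => exact inl_mem_V j
    | Sum.inr j => exact absurd ⟨j, hx⟩ hw

lemma clique_card_le {C : Finset (GammaVert n)}
    (h : (Gamma n).IsClique (C : Set (GammaVert n))) : C.card ≤ n + 1 := by
  rcases clique_subset h with hs | ⟨i, hs⟩
  · exact le_trans (Finset.card_le_card hs) card_V.le
  · exact le_trans (Finset.card_le_card hs) (card_K i).le

end GammaAux

namespace GammaAux
open SimpleGraph Finset


lemma vert_cases {n : ℕ} (x : GammaVert n) :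
    (∃ i, x = Sum.inl i) ∨ (∃ i, x = Sum.inr i) :=
  match x with
  | Sum.inl i => Or.inl ⟨i, rfl⟩
  | Sum.inr i => Or.inr ⟨i, rfl⟩

/-- The witness family for `r ≥ n + 1`. -/
def CB (n r : ℕ) (j : Fin r) : Finset (GammaVert n) :=
  if h : (j : ℕ) < n + 1 then K n ⟨j, h⟩ else V n

lemma CB_pos {n r : ℕ} {j : Fin r} (h : (j : ℕ) < n + 1) : CB n r j = K n ⟨j, h⟩ :=
  dif_pos h

lemma CB_neg {n r : ℕ} {j : Fin r} (h : ¬ (j : ℕ) < n + 1) : CB n r j = V n :=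
  dif_neg h

lemma CB_clique (n r : ℕ) (j : Fin r) :
    (Gamma n).IsClique (CB n r j : Set (GammaVert n)) := by
  by_cases h : (j : ℕ) < n + 1
  · rw [CB_pos h]; exact isClique_K _
  · rw [CB_neg h]; exact isClique_V

lemma CB_card (n r : ℕ) (j : Fin r) : (CB n r j).card = n + 1 := by
  by_cases h : (j : ℕ) < n + 1
  · rw [CB_pos h]; exact card_K _
  · rw [CB_neg h]; exact card_V

lemma great_big (n r : ℕ) (hn : 2 ≤ n) (hr : n + 1 ≤ r) :
    IsGreatest (cliqueSums n r) (r * (n + 1)) := by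
  constructor
  · refine ⟨CB n r, CB_clique n r, ?_, ?_⟩
    · rw [Finset.eq_empty_iff_forall_notMem]
      intro x hx
      have key : ∀ j : Fin r, x ∈ CB n r j := fun j =>
        (Finset.inf_le (Finset.mem_univ j) : Finset.univ.inf (CB n r) ⊆ CB n r j) hx
      rcases vert_cases x with ⟨i, rfl⟩ | ⟨i, rfl⟩
      · have h1 := key ⟨i.val, by omega⟩
        rw [CB_pos (by exact i.isLt)] at h1
        exact (inl_mem_K.1 h1) rfl
      · by_cases hi : (i : ℕ) = 0
        · have h1 := key ⟨1, by omega⟩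
          rw [CB_pos (by simp only [Fin.val_mk]; omega)] at h1
          have h2 := inr_mem_K.1 h1
          apply_fun (fun t => (t : ℕ)) at h2
          simp at h2
          omega
        · have h1 := key ⟨0, by omega⟩
          rw [CB_pos (by simp only [Fin.val_mk]; omega)] at h1
          have h2 := inr_mem_K.1 h1
          apply_fun (fun t => (t : ℕ)) at h2
          simp only [Fin.val_mk] at h2
          omega
    · rw [Finset.sum_congr rfl (fun j _ => CB_card n r j), Finset.sum_const,
        Finset.card_univ, Fintype.card_fin, smul_eq_mul]
  · rintro s ⟨C, hcl, -, rfl⟩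
    calc ∑ i, (C i).card ≤ Finset.univ.card • (n + 1) :=
          Finset.sum_le_card_nsmul _ _ _ (fun j _ => clique_card_le (hcl j))
      _ = r * (n + 1) := by simp [Finset.card_univ]

/-- The witness family for `r = n = m + 2`. -/
def CS (m : ℕ) (j : Fin (m + 2)) : Finset (GammaVert (m + 2)) :=
  if (j : ℕ) < m + 1 then K (m + 2) ⟨(j : ℕ), by omega⟩
  else (K (m + 2) ⟨m + 1, by omega⟩).erase (Sum.inl ⟨m + 2, by omega⟩)

lemma CS_pos {m : ℕ} {j : Fin (m + 2)} (h : (j : ℕ) < m + 1) :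
    CS m j = K (m + 2) ⟨(j : ℕ), by omega⟩ := if_pos h

lemma CS_neg {m : ℕ} {j : Fin (m + 2)} (h : ¬ (j : ℕ) < m + 1) :
    CS m j = (K (m + 2) ⟨m + 1, by omega⟩).erase (Sum.inl ⟨m + 2, by omega⟩) := if_neg h

lemma CS_clique (m : ℕ) (j : Fin (m + 2)) :
    (Gamma (m + 2)).IsClique (CS m j : Set (GammaVert (m + 2))) := by
  by_cases h : (j : ℕ) < m + 1
  · rw [CS_pos h]; exact isClique_K _
  · rw [CS_neg h]
    exact (isClique_K _).subset (Finset.coe_subset.2 (Finset.erase_subset _ _))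

lemma great_small (n : ℕ) (hn : 2 ≤ n) :
    IsGreatest (cliqueSums n n) (n * n + n - 1) := by
  obtain ⟨m, rfl⟩ : ∃ m, n = m + 2 := ⟨n - 2, by omega⟩
  constructor
  · refine ⟨CS m, CS_clique m, ?_, ?_⟩
    · rw [Finset.eq_empty_iff_forall_notMem]
      intro x hx
      have key : ∀ j : Fin (m + 2), x ∈ CS m j := fun j =>
        (Finset.inf_le (Finset.mem_univ j) : Finset.univ.inf (CS m) ⊆ CS m j) hx
      rcases vert_cases x with ⟨i, rfl⟩ | ⟨i, rfl⟩
      · rcases lt_trichotomy (i : ℕ) (m + 1) with hi | hi | hi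
        · have h1 := key ⟨(i : ℕ), by omega⟩
          rw [CS_pos (by simpa using hi)] at h1
          have h2 := inl_mem_K.1 h1
          exact h2 (Fin.ext (by simp))
        · have h1 := key ⟨m + 1, by omega⟩
          rw [CS_neg (by simp)] at h1
          have h2 := inl_mem_K.1 (Finset.mem_of_mem_erase h1)
          exact h2 (Fin.ext (by simpa using hi))
        · have h1 := key ⟨m + 1, by omega⟩
          rw [CS_neg (by simp)] at h1
          have h2 := (Finset.mem_erase.1 h1).1
          have hi2 : (i : ℕ) = m + 2 := by omega
          exact h2 (by rw [show i = (⟨m + 2, by omega⟩ : Fin (m + 3)) from Fin.ext (by simpa using hi2)])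
      · by_cases hi : (i : ℕ) = 0
        · have h1 := key ⟨m + 1, by omega⟩
          rw [CS_neg (by simp)] at h1
          have h2 := inr_mem_K.1 (Finset.mem_of_mem_erase h1)
          apply_fun (fun t => (t : ℕ)) at h2
          simp at h2
          omega
        · have h1 := key ⟨0, by omega⟩
          rw [CS_pos (by simp)] at h1
          have h2 := inr_mem_K.1 h1
          apply_fun (fun t => (t : ℕ)) at h2
          simp only [Fin.val_mk] at h2
          omega
    · rw [Fin.sum_univ_castSucc]
      have h1 : ∀ j : Fin (m + 1), (CS m j.castSucc).card = m + 3 := by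
        intro j
        rw [CS_pos (by simpa using j.isLt)]
        exact card_K _
      have h2 : (CS m (Fin.last (m + 1))).card = m + 2 := by
        rw [CS_neg (by simp [Fin.last])]
        have := Finset.card_erase_of_mem ((inl_mem_K (n := m + 2) (i := ⟨m + 2, by omega⟩)
          (j := ⟨m + 1, by omega⟩)).2 (fun h => by
          have := congrArg (fun t : Fin (m + 3) => (t : ℕ)) h
          simp at this))
        exact this.trans ((congrArg (fun x => x - 1) (card_K _)).trans rfl)
      rw [Finset.sum_congr rfl (fun j _ => h1 j), h2, Finset.sum_const, Finset.card_univ,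
        Fintype.card_fin, smul_eq_mul]
      have e1 : (m+2)*(m+2) = m*m + 4*m + 4 := by ring
      have e2 : (m+1)*(m+3) = m*m + 4*m + 3 := by ring
      omega
  · rintro s ⟨C, hcl, hinf, rfl⟩
    by_cases hall : ∀ j, (C j).card = m + 3
    · exfalso
      classical
      set S : Finset (Fin (m+3)) := Finset.univ.biUnion
        (fun j : Fin (m+2) => Finset.univ.filter (fun i : Fin (m+3) => Sum.inr i ∈ C j))
        with hS
      have hcard1 : ∀ j : Fin (m+2),
          (Finset.univ.filter (fun i : Fin (m+3) => Sum.inr i ∈ C j)).card ≤ 1 := by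
        intro j
        rw [Finset.card_le_one]
        intro a ha b hb
        simp only [Finset.mem_filter] at ha hb
        by_contra hab
        exact adj_rr (hcl j ha.2 hb.2 (fun h => hab (inr_eq_inr.1 h)))
      have hScard : S.card ≤ m + 2 := by
        calc S.card ≤ ∑ j : Fin (m+2),
            (Finset.univ.filter (fun i : Fin (m+3) => Sum.inr i ∈ C j)).card :=
              Finset.card_biUnion_le
          _ ≤ ∑ _j : Fin (m+2), 1 := Finset.sum_le_sum (fun j _ => hcard1 j)
          _ = m + 2 := by simp
      obtain ⟨i, hiS⟩ : ∃ i : Fin (m+3), i ∉ S := by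
        by_contra h
        push_neg at h
        have : (Finset.univ : Finset (Fin (m+3))).card ≤ S.card :=
          Finset.card_le_card (fun i _ => h i)
        simp [Finset.card_univ] at this
        omega
      have claim : ∀ j, (Sum.inl i : GammaVert (m+2)) ∈ C j := by
        intro j
        rcases clique_subset (hcl j) with hsub | ⟨k, hsub⟩
        · have : C j = V (m+2) :=
            Finset.eq_of_subset_of_card_le hsub (by rw [card_V, hall j])
          rw [this]; exact inl_mem_V i
        · have heq : C j = K (m+2) k :=
            Finset.eq_of_subset_of_card_le hsub (by rw [card_K, hall j])
          have hkS : k ∈ S := by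
            rw [hS]
            refine Finset.mem_biUnion.2 ⟨j, Finset.mem_univ j, ?_⟩
            simp only [Finset.mem_filter, Finset.mem_univ, true_and]
            rw [heq]; exact inr_mem_K.2 rfl
          have hki : i ≠ k := fun h => hiS (h ▸ hkS)
          rw [heq]; exact inl_mem_K.2 hki
      have hmem : (Sum.inl i : GammaVert (m+2)) ∈ Finset.univ.inf C := by
        have hle : ({Sum.inl i} : Finset (GammaVert (m+2))) ≤ Finset.univ.inf C :=
          Finset.le_inf (fun j _ => Finset.singleton_subset_iff.2 (claim j))
        exact hle (Finset.mem_singleton_self _)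
      rw [hinf] at hmem
      exact absurd hmem (Finset.notMem_empty _)
    · push_neg at hall
      obtain ⟨j, hj⟩ := hall
      have hj' : (C j).card ≤ m + 2 := by
        have := clique_card_le (hcl j)
        omega
      rw [← Finset.add_sum_erase _ _ (Finset.mem_univ j)]
      have hrest : ∑ x ∈ Finset.univ.erase j, (C x).card ≤ (m+1) * (m+3) := by
        calc ∑ x ∈ Finset.univ.erase j, (C x).card
            ≤ (Finset.univ.erase j).card • (m + 3) :=
              Finset.sum_le_card_nsmul _ _ _ (fun x _ => clique_card_le (hcl x))
          _ = (m+1) * (m+3) := by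
              rw [Finset.card_erase_of_mem (Finset.mem_univ j), Finset.card_univ,
                Fintype.card_fin, smul_eq_mul]
              norm_num
      have e1 : (m+2)*(m+2) = m*m + 4*m + 4 := by ring
      have e2 : (m+1)*(m+3) = m*m + 4*m + 3 := by ring
      omega

lemma cliqueNum_eq (n : ℕ) : (Gamma n).cliqueNum = n + 1 := by
  have hg : IsGreatest {k | ∃ s, (Gamma n).IsNClique k s} (n + 1) := by
    constructor
    · exact ⟨V n, isClique_V, card_V⟩
    · rintro k ⟨s, hs⟩
      rw [← hs.card_eq]
      exact clique_card_le hs.isClique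
  exact hg.csSup_eq

end GammaAux

/-- Instability of the growth (Proposition 2.3, combinatorial level): for the sequence
`a r = z_r(Γₙ)`, one has `a (n+1) - a n > n + 1` while `a (r+1) - a r = n + 1` for all
`r > n`; so the difference sequence is not constant but is eventually constant, equal to
the clique number `n + 1` of `Γₙ`. -/
theorem stmt_5 (n : ℕ) (hn : 2 ≤ n) (a : ℕ → ℕ)
    (ha : ∀ r : ℕ, 2 ≤ r → IsGreatest (cliqueSums n r) (a r)) :
    n + 1 < a (n + 1) - a n ∧
    (∀ r : ℕ, n < r → a (r + 1) - a r = n + 1) ∧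
    (Gamma n).cliqueNum = n + 1 := by
  have h1 : a n = n * n + n - 1 := (ha n hn).unique (GammaAux.great_small n hn)
  have h2 : ∀ r, n + 1 ≤ r → a r = r * (n + 1) := fun r hr =>
    (ha r (by omega)).unique (GammaAux.great_big n r hn hr)
  refine ⟨?_, fun r hr => ?_, GammaAux.cliqueNum_eq n⟩
  · rw [h1, h2 (n+1) le_rfl]
    have e : (n+1)*(n+1) = n*n + 2*n + 1 := by ring
    rw [e]
    generalize n * n = M
    omega
  · rw [h2 r (by omega), h2 (r+1) (by omega)]
    have e : (r+1)*(n+1) = r*(n+1) + (n+1) := by ring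
    rw [e]
    generalize r * (n+1) = Q
    omega
end

section
/- In the graph Γₙ, any n of the maximal cliques C₀,…,C_{n+1} have nonempty common intersection (i.e. the family of maximal cliques has the property that every subfamily of size at most n intersects), but C₁ ∩ C₂ ∩ ⋯ ∩ C_{n+1} = ∅. -/
/-- The maximal cliques of `Γₙ`: `C 0 = {v₀, …, vₙ}` and
`C (i+1) = ({v₀, …, vₙ} \ {vᵢ}) ∪ {wᵢ}` for `0 ≤ i ≤ n`. -/
def maxClique (n : ℕ) (k : Fin (n + 2)) : Finset (GammaVert n) :=
  match k with
  | ⟨0, _⟩ => Finset.univ.image Sum.inl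
  | ⟨i + 1, h⟩ =>
      ((Finset.univ.image Sum.inl).erase (Sum.inl ⟨i, by omega⟩)) ∪ {Sum.inr ⟨i, by omega⟩}

lemma inl_mem_succ (n : ℕ) (i : ℕ) (h : i + 1 < n + 2) (j : Fin (n + 1)) :
    @Membership.mem (GammaVert n) _ _ (maxClique n ⟨i + 1, h⟩) (Sum.inl j) ↔ (⟨i, by omega⟩ : Fin (n+1)) ≠ j := by
  change (Sum.inl j : Fin (n+1) ⊕ Fin (n+1)) ∈ (((Finset.univ.image Sum.inl).erase (Sum.inl ⟨i, by omega⟩)) ∪ {Sum.inr ⟨i, by omega⟩} : Finset (Fin (n+1) ⊕ Fin (n+1))) ↔ _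
  simp [maxClique, eq_comm]

lemma inr_mem_succ (n : ℕ) (i : ℕ) (h : i + 1 < n + 2) (m : Fin (n + 1)) :
    @Membership.mem (GammaVert n) _ _ (maxClique n ⟨i + 1, h⟩) (Sum.inr m) ↔ m = (⟨i, by omega⟩ : Fin (n+1)) := by
  change (Sum.inr m : Fin (n+1) ⊕ Fin (n+1)) ∈ (((Finset.univ.image Sum.inl).erase (Sum.inl ⟨i, by omega⟩)) ∪ {Sum.inr ⟨i, by omega⟩} : Finset (Fin (n+1) ⊕ Fin (n+1))) ↔ _
  simp [maxClique]

/-- Any at most `n` of the maximal cliques `C₀, …, C_{n+1}` of `Γₙ` have a common vertex,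
but `C₁ ∩ ⋯ ∩ C_{n+1} = ∅`. -/
theorem stmt_6 (n : ℕ) (hn : 2 ≤ n) :
    (∀ s : Finset (Fin (n + 2)), s.card ≤ n → (s.inf (maxClique n)).Nonempty) ∧
    (Finset.univ.erase (0 : Fin (n + 2))).inf (maxClique n) = ∅ := by
  constructor
  · intro s hs
    -- there is j : Fin (n+1) with j.succ ∉ s
    have : ¬ ∀ j : Fin (n + 1), Fin.succ j ∈ s := by
      intro hall
      have hinj : Function.Injective (Fin.succ : Fin (n+1) → Fin (n+2)) :=
        Fin.succ_injective _
      have := Finset.card_le_card_of_injOn (s := Finset.univ)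
        (Fin.succ : Fin (n+1) → Fin (n+2)) (fun j _ => hall j) (hinj.injOn)
      simp at this
      omega
    push_neg at this
    obtain ⟨j, hj⟩ := this
    refine ⟨Sum.inl j, ?_⟩
    refine Finset.mem_inf.mpr ?_
    rintro ⟨k, hk⟩ hks
    match k, hk with
    | 0, hk => exact Finset.mem_image_of_mem _ (Finset.mem_univ _)
    | i + 1, hk =>
      rw [inl_mem_succ]
      intro hij
      apply hj
      have : Fin.succ j = ⟨i + 1, hk⟩ := by
        ext
        simp [Fin.succ, ← hij]
      rwa [this]
  · rw [Finset.eq_empty_iff_forall_notMem]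
    intro x hx
    rw [Finset.mem_inf] at hx
    match x with
    | Sum.inl j =>
      have hmem : (⟨j.val + 1, by omega⟩ : Fin (n+2)) ∈ Finset.univ.erase (0 : Fin (n+2)) := by
        simp only [Finset.mem_erase, Finset.mem_univ, and_true, ne_eq, Fin.ext_iff, Fin.val_zero]; omega
      have := hx _ hmem
      rw [inl_mem_succ] at this
      exact this rfl
    | Sum.inr m =>
      obtain ⟨k, hkm⟩ : ∃ k : Fin (n+1), k ≠ m := by
        by_cases h0 : m = 0
        · exact ⟨⟨1, by omega⟩, by simp [h0, Fin.ext_iff]⟩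
        · exact ⟨0, fun h => h0 h.symm⟩
      have hmem : (⟨k.val + 1, by omega⟩ : Fin (n+2)) ∈ Finset.univ.erase (0 : Fin (n+2)) := by
        simp only [Finset.mem_erase, Finset.mem_univ, and_true, ne_eq, Fin.ext_iff, Fin.val_zero]; omega
      have := hx _ hmem
      rw [inr_mem_succ] at this
      exact hkm (by rw [this])
end

section
/- Let A be a commutative ring and r ≥ 2. The kernel of the multiplication map μ_r : A^{⊗r} → A (over a base ring k, with A a commutative k-algebra generated as a k-algebra by a set V) is the ideal generated by the elements v(i) − v(i+1) for v ∈ V and 1 ≤ i ≤ r−1, where v(i) = 1⊗⋯⊗v⊗⋯⊗1 with v in the i-th tensor factor. -/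
open scoped TensorProduct

/-- The multiplication map `μ_r : A^{⊗r} → A`, `a₁ ⊗ ⋯ ⊗ a_r ↦ a₁ ⋯ a_r`, as an algebra
homomorphism. -/
noncomputable def mulAlgHom (k A : Type*) [CommRing k] [CommRing A] [Algebra k A] (r : ℕ) :
    (⨂[k] _ : Fin r, A) →ₐ[k] A :=
  PiTensorProduct.liftAlgHom (MultilinearMap.mkPiAlgebra k (Fin r) A)
    (by simp) (by intro x y; simp [Finset.prod_mul_distrib])

/-- `v(i) = 1 ⊗ ⋯ ⊗ v ⊗ ⋯ ⊗ 1` with `v` in the `i`-th tensor factor. -/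
noncomputable def slot (k A : Type*) [CommRing k] [CommRing A] [Algebra k A] (r : ℕ)
    (i : Fin r) (v : A) : ⨂[k] _ : Fin r, A :=
  PiTensorProduct.singleAlgHom (R := k) (A := fun _ : Fin r => A) i v

/-- Lemma 4.1: if the commutative `k`-algebra `A` is generated by `V`, then the kernel of the
multiplication map `μ_r : A^{⊗r} → A` is the ideal generated by the elements
`v(i) - v(i+1)` for `v ∈ V` and `1 ≤ i ≤ r - 1`. -/
theorem stmt_7 (k A : Type*) [CommRing k] [CommRing A] [Algebra k A]
    (V : Set A) (hV : Algebra.adjoin k V = ⊤) (r : ℕ) (hr : 2 ≤ r) :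
    {x : ⨂[k] _ : Fin r, A | mulAlgHom k A r x = 0} =
      (Ideal.span {x : ⨂[k] _ : Fin r, A | ∃ v ∈ V, ∃ i j : Fin r,
        (j : ℕ) = (i : ℕ) + 1 ∧ x = slot k A r i v - slot k A r j v} : Set _) := by
  haveI : NeZero r := ⟨by omega⟩
  set J : Ideal (⨂[k] _ : Fin r, A) := Ideal.span {x : ⨂[k] _ : Fin r, A | ∃ v ∈ V, ∃ i j : Fin r,
        (j : ℕ) = (i : ℕ) + 1 ∧ x = slot k A r i v - slot k A r j v} with hJ
  set q : (⨂[k] _ : Fin r, A) →ₐ[k] _ := Ideal.Quotient.mkₐ k J with hq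
  set Sl : Fin r → A →ₐ[k] (⨂[k] _ : Fin r, A) :=
    fun i => PiTensorProduct.singleAlgHom (R := k) (A := fun _ : Fin r => A) i with hSl
  have hslot : ∀ (i : Fin r) (a : A), slot k A r i a = Sl i a := fun _ _ => rfl
  have hμs : ∀ (i : Fin r) (a : A), mulAlgHom k A r (Sl i a) = a := by
    intro i a
    simp [mulAlgHom, hSl, PiTensorProduct.singleAlgHom]
    erw [PiTensorProduct.liftAlgHom_apply]
    rw [PiTensorProduct.lift.tprod, MultilinearMap.mkPiAlgebra_apply, Finset.prod_pi_mulSingle']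
    simp
  have hgen : ∀ v ∈ V, ∀ i j : Fin r, (j : ℕ) = (i : ℕ) + 1 → q (Sl i v) = q (Sl j v) := by
    intro v hv i j hij
    have : Sl i v - Sl j v ∈ J := Ideal.subset_span ⟨v, hv, i, j, hij, rfl⟩
    simpa [hq, Ideal.Quotient.mkₐ_eq_mk, Ideal.Quotient.eq] using this
  have hzero : ∀ v ∈ V, ∀ n (h : n < r), q (Sl ⟨n, h⟩ v) = q (Sl 0 v) := by
    intro v hv n
    induction n with
    | zero => intro h; congr 1
    | succ m ih =>
      intro h
      have hm : m < r := by omega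
      rw [← hgen v hv ⟨m, hm⟩ ⟨m + 1, h⟩ rfl]
      exact ih hm
  have hall : ∀ (i : Fin r) (a : A), q (Sl i a) = q (Sl 0 a) := by
    intro i a
    have hsub : V ⊆ (AlgHom.equalizer (q.comp (Sl i)) (q.comp (Sl 0)) : Set A) := by
      intro v hv
      show q (Sl i v) = q (Sl 0 v)
      simpa using hzero v hv i.1 i.2
    have : a ∈ AlgHom.equalizer (q.comp (Sl i)) (q.comp (Sl 0)) := by
      have := Algebra.adjoin_le (R := k) hsub
      rw [hV, top_le_iff] at this
      rw [this]; trivial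
    exact this
  have key : q = (q.comp (Sl 0)).comp (mulAlgHom k A r) := by
    apply PiTensorProduct.algHom_ext
    intro i
    ext a
    simp only [AlgHom.comp_apply]
    rw [hμs i a]
    exact hall i a
  ext x
  constructor
  · intro hx
    have h0 : q x = 0 := by
      rw [key]
      simp only [AlgHom.comp_apply]
      rw [hx]
      simp
    rw [hq, Ideal.Quotient.mkₐ_eq_mk] at h0
    exact (Ideal.Quotient.eq_zero_iff_mem).mp h0
  · intro hx
    show mulAlgHom k A r x = 0
    have hle : J ≤ RingHom.ker (mulAlgHom k A r) := by
      rw [hJ, Ideal.span_le]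
      rintro _ ⟨v, hv, i, j, hij, rfl⟩
      simp [RingHom.mem_ker, hslot, hμs]
    exact hle hx
end

section
/- Let A be the exterior algebra over ℚ on a finite-dimensional vector space V (placed in odd degrees, so all generators square to zero and anticommute). Let K_r ⊆ A^{⊗r} be the kernel of the r-fold multiplication map. Then K_r^{n+1} = 0 for n = (r−1)·dim V. -/
open ExteriorAlgebra

section Aux

variable {M : Type*} [AddCommGroup M] [Module ℚ M]

/-- The grade involution, sending `ι m` to `-ι m`. -/
noncomputable def negAlg (M : Type*) [AddCommGroup M] [Module ℚ M] :
    ExteriorAlgebra ℚ M →ₐ[ℚ] ExteriorAlgebra ℚ M :=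
  ExteriorAlgebra.lift ℚ ⟨-(ExteriorAlgebra.ι ℚ), fun m => by
    simp [ExteriorAlgebra.ι_sq_zero]⟩

lemma negAlg_ι (m : M) : negAlg M (ι ℚ m) = - ι ℚ m := by
  simp [negAlg]

lemma mul_ι_eq (a : ExteriorAlgebra ℚ M) (m : M) :
    a * ι ℚ m = ι ℚ m * negAlg M a := by
  induction a using ExteriorAlgebra.induction with
  | algebraMap r => rw [Algebra.commutes, AlgHom.commutes]
  | ι v =>
      rw [negAlg_ι, mul_neg]
      have h := ι_add_mul_swap (R := ℚ) v m
      rw [eq_comm, neg_eq_iff_add_eq_zero, add_comm]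
      exact h
  | mul x y hx hy => rw [mul_assoc, hy, ← mul_assoc, hx, mul_assoc, map_mul]
  | add x y hx hy => rw [add_mul, hx, hy, map_add, mul_add]

/-- Powers of the submodule generated by vectors in a submodule `W` are spanned by
`ιMulti` applied to families of vectors in `W`. -/
lemma pow_map_ι_le_span (W : Submodule ℚ M) (k : ℕ) :
    (Submodule.map (ι ℚ) W) ^ k ≤
      Submodule.span ℚ {x | ∃ w : Fin k → W, x = ιMulti ℚ k (fun i => (w i : M))} := by
  induction k with
  | zero =>
      rw [pow_zero, Submodule.one_eq_span]
      refine Submodule.span_mono ?_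
      rintro _ rfl
      exact ⟨fun i => i.elim0, by simp⟩
  | succ k ih =>
      rw [pow_succ']
      refine (mul_le_mul' le_rfl ih).trans ?_
      rw [Submodule.mul_le]
      rintro _ ⟨w, hw, rfl⟩ y hy
      induction hy using Submodule.span_induction with
      | mem z hz =>
          obtain ⟨ws, rfl⟩ := hz
          refine Submodule.subset_span ⟨Fin.cons ⟨w, hw⟩ ws, ?_⟩
          have hfam : (fun i => ((Fin.cons (⟨w, hw⟩ : W) ws : Fin (k+1) → W) i : M)) =
              Fin.cons w (fun i => (ws i : M)) := by
            ext i
            refine Fin.cases ?_ ?_ i <;> simp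
          rw [hfam, ιMulti_succ_apply]
          simp [Matrix.vecTail, Function.comp_def]
      | zero => simp
      | add z₁ z₂ _ _ h₁ h₂ => rw [mul_add]; exact add_mem h₁ h₂
      | smul c z _ h => rw [mul_smul_comm]; exact Submodule.smul_mem _ _ h

end Aux

/-- The `r`-fold multiplication map `μ_r : Λ(V)^{⊗r} → Λ(V)` of the exterior algebra.
Here the `r`-fold *graded* tensor power `Λ(V)^{⊗r}` (with Koszul signs) is identified with
the exterior algebra `Λ(V^{⊕r}) = Λ(Fin r → V)`, under which the `i`-th factor `Λ(V)` embeds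
as the subalgebra generated by the `i`-th summand, and the multiplication map corresponds to
the algebra map induced by the sum map `V^{⊕r} → V`. -/
noncomputable def extMul (V : Type*) [AddCommGroup V] [Module ℚ V] (r : ℕ) :
    ExteriorAlgebra ℚ (Fin r → V) →ₐ[ℚ] ExteriorAlgebra ℚ V :=
  ExteriorAlgebra.lift ℚ
    ⟨(ExteriorAlgebra.ι ℚ).comp (∑ i : Fin r, LinearMap.proj i),
      fun m => by rw [LinearMap.comp_apply]; exact ExteriorAlgebra.ι_sq_zero _⟩

set_option maxHeartbeats 1000000 in
/-- The key computation in Theorem 1.4: for `A = Λ(V)` the exterior algebra on a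
finite-dimensional `ℚ`-vector space (all generators odd), the kernel `K_r` of the `r`-fold
multiplication map `A^{⊗r} → A` satisfies `K_r^{n+1} = 0` for `n = (r-1)·dim V`. -/
theorem stmt_8 (V : Type*) [AddCommGroup V] [Module ℚ V] [FiniteDimensional ℚ V]
    (r : ℕ) (hr : 2 ≤ r) :
    (LinearMap.ker (extMul V r).toLinearMap : Submodule ℚ (ExteriorAlgebra ℚ (Fin r → V))) ^
      ((r - 1) * Module.finrank ℚ V + 1) = ⊥ := by
  classical
  set d := Module.finrank ℚ V with hd
  set n := (r - 1) * d with hn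
  set f : (Fin r → V) →ₗ[ℚ] V := ∑ i : Fin r, LinearMap.proj i with hf
  have hf_apply : ∀ v : Fin r → V, f v = ∑ i : Fin r, v i := by
    intro v
    rw [hf, LinearMap.sum_apply]
    simp [LinearMap.proj_apply]
  set W : Submodule ℚ (Fin r → V) := LinearMap.ker f with hW
  set P : Submodule ℚ (ExteriorAlgebra ℚ (Fin r → V)) := Submodule.map (ι ℚ) W with hP
  have i0 : Fin r := ⟨0, by omega⟩
  set s : V →ₗ[ℚ] (Fin r → V) := LinearMap.single ℚ (fun _ : Fin r => V) i0 with hs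
  have hfs : ∀ v : V, f (s v) = v := by
    intro v
    rw [hf_apply]
    simp [hs, Pi.single_apply]
  -- extMul on ι
  have he_ι : ∀ v : Fin r → V, extMul V r (ι ℚ v) = ι ℚ (f v) := by
    intro v
    rw [extMul, ExteriorAlgebra.lift_ι_apply]
    rfl
  set σ : ExteriorAlgebra ℚ V →ₐ[ℚ] ExteriorAlgebra ℚ (Fin r → V) := ExteriorAlgebra.map s with hσ
  -- commutation: ⊤ * P ≤ P * ⊤
  have hcomm : (⊤ : Submodule ℚ (ExteriorAlgebra ℚ (Fin r → V))) * P ≤ P * ⊤ := by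
    rw [Submodule.mul_le]
    rintro a _ _ ⟨w, hw, rfl⟩
    rw [mul_ι_eq]
    exact Submodule.mul_mem_mul ⟨w, hw, rfl⟩ trivial
  have hPT_left : ∀ a x, x ∈ P * ⊤ → a * x ∈ P * ⊤ := by
    intro a x hx
    have : a * x ∈ (⊤ : Submodule ℚ _) * (P * ⊤) := Submodule.mul_mem_mul trivial hx
    refine (le_trans (le_of_eq (mul_assoc _ _ _).symm) ?_ : (⊤ : Submodule ℚ _) * (P * ⊤) ≤ P * ⊤) this
    refine le_trans (mul_le_mul' hcomm le_rfl) ?_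
    refine le_trans (le_of_eq (mul_assoc _ _ _)) ?_
    exact mul_le_mul' le_rfl le_top
  have hPT_right : ∀ a x, x ∈ P * ⊤ → x * a ∈ P * ⊤ := by
    intro a x hx
    have : x * a ∈ (P * ⊤) * ⊤ := Submodule.mul_mem_mul hx trivial
    refine (le_trans (le_of_eq (mul_assoc _ _ _)) (mul_le_mul' le_rfl le_top) :
      (P * ⊤) * ⊤ ≤ P * ⊤) this
  have hP_le : P ≤ P * ⊤ := by
    intro p hp
    have h1 : (1 : ExteriorAlgebra ℚ (Fin r → V)) ∈ (⊤ : Submodule ℚ _) := trivial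
    have h2 := Submodule.mul_mem_mul hp h1
    rwa [mul_one] at h2
  -- Claim A
  have claimA : ∀ x : ExteriorAlgebra ℚ (Fin r → V), x - σ (extMul V r x) ∈ P * ⊤ := by
    intro x
    induction x using ExteriorAlgebra.induction with
    | algebraMap c => rw [AlgHom.commutes, AlgHom.commutes, sub_self]; exact zero_mem _
    | ι v =>
        rw [he_ι, hσ, map_apply_ι, ← map_sub]
        refine hP_le ⟨v - s (f v), ?_, rfl⟩
        rw [SetLike.mem_coe, LinearMap.mem_ker, map_sub, hfs, sub_self]
    | mul x y hx hy =>
        rw [map_mul, map_mul]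
        have : x * y - σ (extMul V r x) * σ (extMul V r y) =
            x * (y - σ (extMul V r y)) + (x - σ (extMul V r x)) * σ (extMul V r y) := by noncomm_ring
        rw [this]
        exact add_mem (hPT_left _ _ hy) (hPT_right _ _ hx)
    | add x y hx hy =>
        rw [map_add, map_add]
        have : x + y - (σ (extMul V r x) + σ (extMul V r y)) =
            (x - σ (extMul V r x)) + (y - σ (extMul V r y)) := by abel
        rw [this]
        exact add_mem hx hy
  -- K ≤ P * ⊤
  have hK_le : LinearMap.ker (extMul V r).toLinearMap ≤ P * ⊤ := by
    intro x hx
    have hx0 : extMul V r x = 0 := hx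
    have := claimA x
    rwa [hx0, map_zero, sub_zero] at this
  -- finrank of W
  have hfsur : LinearMap.range f = ⊤ := by
    rw [LinearMap.range_eq_top]
    intro v
    exact ⟨s v, hfs v⟩
  have hWrank : Module.finrank ℚ W = n := by
    have h1 := LinearMap.finrank_range_add_finrank_ker f
    rw [hfsur, finrank_top] at h1
    have h2 : Module.finrank ℚ (Fin r → V) = r * d := by
      rw [Module.finrank_pi_fintype]
      simp [hd, Finset.sum_const, mul_comm]
    rw [h2] at h1
    have h3 : Module.finrank ℚ (LinearMap.ker f) = r * d - d := by omega
    rw [hW, h3, hn, Nat.sub_one_mul]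
  -- P ^ (n+1) = ⊥
  have hPpow : P ^ (n + 1) = ⊥ := by
    rw [eq_bot_iff]
    refine le_trans (pow_map_ι_le_span W (n + 1)) ?_
    rw [Submodule.span_le]
    rintro _ ⟨w, rfl⟩
    have hdep : ¬ LinearIndependent ℚ (fun i => (w i : Fin r → V)) := by
      intro hli
      have hli' : LinearIndependent ℚ w := hli.of_comp W.subtype
      have := hli'.fintype_card_le_finrank
      rw [hWrank, Fintype.card_fin] at this
      omega
    have := AlternatingMap.map_linearDependent (ιMulti ℚ (n + 1)) _ hdep
    simp [this]
  -- (P * ⊤) ^ (n+1) ≤ P ^ (n+1) * ⊤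
  have hpow_le : ∀ k : ℕ, (P * ⊤) ^ k ≤ P ^ k * ⊤ := by
    intro k
    induction k with
    | zero => simp
    | succ k ih =>
        rw [pow_succ, pow_succ]
        refine le_trans (mul_le_mul' ih le_rfl) ?_
        calc P ^ k * ⊤ * (P * ⊤) = P ^ k * (⊤ * P) * ⊤ := by rw [mul_assoc, mul_assoc, mul_assoc]
          _ ≤ P ^ k * (P * ⊤) * ⊤ :=
              mul_le_mul' (mul_le_mul' le_rfl hcomm) le_rfl
          _ = P ^ k * P * (⊤ * ⊤) := by rw [mul_assoc, mul_assoc, mul_assoc]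
          _ ≤ P ^ k * P * ⊤ := mul_le_mul' le_rfl le_top
  -- conclude
  have hmono : ∀ (A B : Submodule ℚ (ExteriorAlgebra ℚ (Fin r → V))), A ≤ B →
      ∀ k : ℕ, A ^ k ≤ B ^ k := by
    intro A B hAB k
    induction k with
    | zero => simp
    | succ k ih => rw [pow_succ, pow_succ]; exact mul_le_mul' ih hAB
  rw [eq_bot_iff]
  calc (LinearMap.ker (extMul V r).toLinearMap) ^ (n + 1) ≤ (P * ⊤) ^ (n + 1) :=
        hmono _ _ hK_le _
    _ ≤ P ^ (n + 1) * ⊤ := hpow_le _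
    _ = ⊥ := by rw [hPpow, Submodule.bot_mul]
end
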